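/- Let G be a graph and D ⊆ V(G) with |D| ≥ 2 and G[D] connected. Let M^p and M^q be distinct maximal strong modules of G[D] that are adjacent in the quotient graph of G[D], and let p ∈ M^p, q ∈ M^q. Then for each vertex u ∈ N(D), at least one of the following holds: (a) u ∈ N[p] ∪ N[q]; (b) there is an induced P₄ in G with u as one endpoint and the other three vertices in D; (c) the quotient graph of G[D] is a clique and N(u) ∩ D is a union of maximal strong modules of G[D]. -/

import Mathlib

open SimpleGraph Set

variable {V : Type*}

/-- Open neighborhood of a set: vertices outside `A` with a neighbor in `A`. -/
def nbhdSet (G : SimpleGraph V) (A : Set V) : Set V :=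
  {v | v ∉ A ∧ ∃ u ∈ A, G.Adj u v}

/-- Union of closed neighborhoods of vertices of `X`. -/
def closedNbhd (G : SimpleGraph V) (X : Set V) : Set V :=
  X ∪ {v | ∃ u ∈ X, G.Adj u v}

/-- `A` is a connected component of `G - S`. -/
def IsCompOutside (G : SimpleGraph V) (S A : Set V) : Prop :=
  A.Nonempty ∧ Disjoint A S ∧ (G.induce A).Connected ∧
    ∀ u ∈ A, ∀ v, v ∉ A → v ∉ S → ¬ G.Adj u v

/-- `A` is a full component of `G - S`, i.e. `N(A) = S`. -/
def IsFullComp (G : SimpleGraph V) (S A : Set V) : Prop :=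
  IsCompOutside G S A ∧ nbhdSet G A = S

/-- `S` is a minimal separator: it has at least two full components. -/
def IsMinSep (G : SimpleGraph V) (S : Set V) : Prop :=
  ∃ A B : Set V, A ≠ B ∧ IsFullComp G S A ∧ IsFullComp G S B

/-- `f` is an induced copy of the path on `k` vertices in `G`. -/
def IsInducedPathMap (G : SimpleGraph V) {k : ℕ} (f : Fin k ↪ V) : Prop :=
  ∀ i j : Fin k, G.Adj (f i) (f j) ↔ ((i : ℕ) + 1 = (j : ℕ) ∨ (j : ℕ) + 1 = (i : ℕ))

/-- `G` is `P_t`-free: no induced path on `t` vertices. -/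
def PFree (t : ℕ) (G : SimpleGraph V) : Prop :=
  ¬ ∃ f : Fin t ↪ V, IsInducedPathMap G f

/-- `Ω` is a potential maximal clique. -/
def IsPMC (G : SimpleGraph V) (Ω : Set V) : Prop :=
  (∀ D : Set V, IsCompOutside G Ω D → nbhdSet G D ≠ Ω) ∧
  (∀ u ∈ Ω, ∀ v ∈ Ω, u ≠ v → ¬ G.Adj u v →
    ∃ D : Set V, IsCompOutside G Ω D ∧ u ∈ nbhdSet G D ∧ v ∈ nbhdSet G D)

/-- `M` is a module of the induced subgraph `G[A]`. -/
def IsModuleOn (G : SimpleGraph V) (A M : Set V) : Prop :=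
  M ⊆ A ∧ ∀ x ∈ M, ∀ y ∈ M, ∀ z ∈ A \ M, (G.Adj x z ↔ G.Adj y z)

/-- `M` is a strong module of `G[A]`: a proper module overlapping no other module. -/
def IsStrongOn (G : SimpleGraph V) (A M : Set V) : Prop :=
  IsModuleOn G A M ∧ M ≠ A ∧
    ∀ M' : Set V, IsModuleOn G A M' → M ⊆ M' ∨ M' ⊆ M ∨ M ∩ M' = ∅

/-- `M` is a maximal strong module of `G[A]`. -/
def IsMaxStrongOn (G : SimpleGraph V) (A M : Set V) : Prop :=
  M.Nonempty ∧ IsStrongOn G A M ∧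
    ∀ M' : Set V, M'.Nonempty → IsStrongOn G A M' → M ⊆ M' → M' = M

/-- The quotient of `G[A]` by its maximal strong modules is a clique. -/
def QuoIsCliqueOn (G : SimpleGraph V) (A : Set V) : Prop :=
  ∀ M M' : Set V, IsMaxStrongOn G A M → IsMaxStrongOn G A M' → M ≠ M' →
    ∀ x ∈ M, ∀ y ∈ M', G.Adj x y

private lemma walk_closed_aux {α : Type*} {H : SimpleGraph α} {P : α → Prop}
    (hP : ∀ ⦃x y : α⦄, H.Adj x y → P x → P y) :
    ∀ {x y : α}, H.Walk x y → P x → P y := by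
  intro x y w
  induction w with
  | nil => exact id
  | cons a _ ih => exact fun hx => ih (hP a hx)

private lemma reachable_closed_aux {α : Type*} {H : SimpleGraph α} {P : α → Prop}
    (hP : ∀ ⦃x y : α⦄, H.Adj x y → P x → P y) {x y : α}
    (h : H.Reachable x y) (hx : P x) : P y :=
  h.elim fun w => walk_closed_aux hP w hx

private lemma mod_union_aux {G : SimpleGraph V} {D X Y : Set V} (hX : IsModuleOn G D X)
    (hY : IsModuleOn G D Y) (h : (X ∩ Y).Nonempty) : IsModuleOn G D (X ∪ Y) := by
  obtain ⟨t, htX, htY⟩ := h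
  have key : ∀ w ∈ X ∪ Y, ∀ z ∈ D \ (X ∪ Y), (G.Adj w z ↔ G.Adj t z) := by
    rintro w (hw | hw) z hz
    · exact hX.2 w hw t htX z ⟨hz.1, fun hzX => hz.2 (Or.inl hzX)⟩
    · exact hY.2 w hw t htY z ⟨hz.1, fun hzY => hz.2 (Or.inr hzY)⟩
  refine ⟨union_subset hX.1 hY.1, fun x hx y hy z hz => ?_⟩
  rw [key x hx z hz, key y hy z hz]

private lemma maxstrong_eq_aux {G : SimpleGraph V} {D M1 M2 : Set V}
    (h1 : IsMaxStrongOn G D M1) (h2 : IsMaxStrongOn G D M2)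
    (h : (M1 ∩ M2).Nonempty) : M1 = M2 := by
  rcases h1.2.1.2.2 M2 h2.2.1.1 with hs | hs | hs
  · exact (h1.2.2 M2 h2.1 h2.2.1 hs).symm
  · exact h2.2.2 M1 h1.1 h1.2.1 hs
  · exact absurd hs h.ne_empty

/-- Neighborhood Decomposition Lemma: for a connected `D` with `|D| ≥ 2`, adjacent
maximal strong modules `Mp ≠ Mq` of `G[D]` with `p ∈ Mp`, `q ∈ Mq`, every `u ∈ N(D)`
satisfies (a), (b), or (c). -/
theorem stmt_15 [Fintype V] (G : SimpleGraph V) (D : Set V)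
    (hD2 : 2 ≤ D.ncard) (hconn : (G.induce D).Connected)
    (Mp Mq : Set V) (hMp : IsMaxStrongOn G D Mp) (hMq : IsMaxStrongOn G D Mq)
    (hne : Mp ≠ Mq) (hadj : ∀ x ∈ Mp, ∀ y ∈ Mq, G.Adj x y)
    (p q : V) (hp : p ∈ Mp) (hq : q ∈ Mq)
    (u : V) (hu : u ∈ nbhdSet G D) :
    (u = p ∨ G.Adj p u ∨ u = q ∨ G.Adj q u) ∨
    (∃ a b c : V, a ∈ D ∧ b ∈ D ∧ c ∈ D ∧
      G.Adj u a ∧ G.Adj a b ∧ G.Adj b c ∧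
      ¬ G.Adj u b ∧ ¬ G.Adj u c ∧ ¬ G.Adj a c) ∨
    (QuoIsCliqueOn G D ∧
      ∀ M : Set V, IsMaxStrongOn G D M →
        M ⊆ G.neighborSet u ∨ M ∩ G.neighborSet u = ∅) := by
  classical
  obtain ⟨huD, a₀, ha₀D, ha₀⟩ := hu
  by_cases hA : u = p ∨ G.Adj p u ∨ u = q ∨ G.Adj q u
  · exact Or.inl hA
  by_cases hB : ∃ a b c : V, a ∈ D ∧ b ∈ D ∧ c ∈ D ∧ G.Adj u a ∧ G.Adj a b ∧ G.Adj b c ∧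
      ¬ G.Adj u b ∧ ¬ G.Adj u c ∧ ¬ G.Adj a c
  · exact Or.inr (Or.inl hB)
  refine Or.inr (Or.inr ?_)
  push_neg at hA hB
  obtain ⟨-, hpu, -, hqu⟩ := hA
  have hup : ¬ G.Adj u p := fun h => hpu h.symm
  have huq : ¬ G.Adj u q := fun h => hqu h.symm
  have hR : ∀ a b c : V, a ∈ D → b ∈ D → c ∈ D → G.Adj u a → G.Adj a b → G.Adj b c →
      ¬ G.Adj u b → ¬ G.Adj u c → G.Adj a c := fun a b c h1 h2 h3 h4 h5 h6 h7 h8 =>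
    hB a b c h1 h2 h3 h4 h5 h6 h7 h8
  have hpD : p ∈ D := hMp.2.1.1.1 hp
  have hqD : q ∈ D := hMq.2.1.1.1 hq
  have hpq : G.Adj p q := hadj p hp q hq
  have hua₀ : G.Adj u a₀ := ha₀.symm
  -- the set D minus N(u)
  set S₀ : Set V := {d | d ∈ D ∧ ¬ G.Adj u d} with hS₀def
  have hpS₀ : p ∈ S₀ := ⟨hpD, hup⟩
  have hqS₀ : q ∈ S₀ := ⟨hqD, huq⟩
  have hindadj : ∀ {x y : V} (hx : x ∈ S₀) (hy : y ∈ S₀), G.Adj x y →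
      (G.induce S₀).Adj ⟨x, hx⟩ ⟨y, hy⟩ := fun hx hy h => h
  -- the component of p in G[D \ N(u)]
  set C₀ : Set V := {d | ∃ h : d ∈ S₀, (G.induce S₀).Reachable ⟨d, h⟩ ⟨p, hpS₀⟩} with hC₀def
  have hC₀sub : C₀ ⊆ S₀ := by rintro d ⟨h, -⟩; exact h
  have hC₀D : C₀ ⊆ D := fun d hd => (hC₀sub hd).1
  have hpC₀ : p ∈ C₀ := ⟨hpS₀, Reachable.refl _⟩
  have hqC₀ : q ∈ C₀ := ⟨hqS₀, (hindadj hqS₀ hpS₀ hpq.symm).reachable⟩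
  have hC₀closed : ∀ d ∈ C₀, ∀ d' ∈ S₀, G.Adj d d' → d' ∈ C₀ := by
    rintro d ⟨hd, hr⟩ d' hd' hadj'
    exact ⟨hd', ((hindadj hd' hd hadj'.symm).reachable).trans hr⟩
  have hspread : ∀ z, z ∈ D → G.Adj u z → ∀ x ∈ C₀, G.Adj z x → ∀ y ∈ C₀, G.Adj z y := by
    intro z hzD hzu x hx hzx y hy
    obtain ⟨hxS, hrx⟩ := hx
    obtain ⟨hyS, hry⟩ := hy
    have hr : (G.induce S₀).Reachable ⟨x, hxS⟩ ⟨y, hyS⟩ := hrx.trans hry.symm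
    refine reachable_closed_aux (P := fun w : ↥S₀ => G.Adj z ↑w) ?_ hr hzx
    intro w w' ha hw
    have haG : G.Adj (w : V) (w' : V) := ha
    exact hR z (w : V) (w' : V) hzD w.2.1 w'.2.1 hzu hw haG w.2.2 w'.2.2
  have hC₀mod : IsModuleOn G D C₀ := by
    refine ⟨hC₀D, ?_⟩
    intro x hx y hy z hz
    by_cases hzu : G.Adj u z
    · constructor
      · intro h; exact (hspread z hz.1 hzu x hx h.symm y hy).symm
      · intro h; exact (hspread z hz.1 hzu y hy h.symm x hx).symm
    · constructor
      · intro h; exact absurd (hC₀closed x hx z ⟨hz.1, hzu⟩ h.symm.symm) hz.2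
      · intro h; exact absurd (hC₀closed y hy z ⟨hz.1, hzu⟩ h.symm.symm) hz.2
  have ha₀C₀ : a₀ ∉ C₀ := fun h => (hC₀sub h).2 hua₀
  have hC₀neD : C₀ ≠ D := fun h => ha₀C₀ (h.symm ▸ ha₀D)
  have hMpC₀ : Mp ⊆ C₀ := by
    rcases hMp.2.1.2.2 C₀ hC₀mod with h | h | h
    · exact h
    · exact absurd (maxstrong_eq_aux hMp hMq ⟨q, h hqC₀, hq⟩) hne
    · exact absurd h (Set.nonempty_iff_ne_empty.mp ⟨p, hp, hpC₀⟩)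
  have hMqC₀ : Mq ⊆ C₀ := by
    rcases hMq.2.1.2.2 C₀ hC₀mod with h | h | h
    · exact h
    · exact absurd (maxstrong_eq_aux hMp hMq ⟨p, hp, h hpC₀⟩) hne
    · exact absurd h (Set.nonempty_iff_ne_empty.mp ⟨q, hq, hqC₀⟩)
  -- the complement of G[D]
  set Hc : SimpleGraph ↥D := (G.induce D)ᶜ with hHcdef
  have hHcAdjIff : ∀ w w' : ↥D, Hc.Adj w w' ↔ ((w : V) ≠ (w' : V) ∧ ¬ G.Adj (w : V) (w' : V)) := by
    intro w w'
    rw [hHcdef, compl_adj]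
    constructor
    · rintro ⟨h1, h2⟩
      exact ⟨fun h => h1 (Subtype.ext h), fun h => h2 h⟩
    · rintro ⟨h1, h2⟩
      exact ⟨fun h => h1 (congrArg _ h), fun h => h2 h⟩
  have hDpre := hconn.preconnected
  by_cases hco : Hc.Preconnected
  · -- CASE 1 : complement of G[D] connected ⇒ contradiction
    exfalso
    set S : Set (Set V) := {M | IsModuleOn G D M ∧ C₀ ⊆ M ∧ M ≠ D} with hSdef
    have hC₀S : C₀ ∈ S := ⟨hC₀mod, subset_rfl, hC₀neD⟩
    obtain ⟨Ms, hMsS, hMsmax⟩ : ∃ a ∈ S, ∀ a' ∈ S, id a ≤ id a' → id a = id a' := by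
      obtain ⟨i, hi, hmax⟩ := Set.Finite.exists_maximalFor id S (Set.toFinite S) ⟨C₀, hC₀S⟩
      exact ⟨i, hi, fun a' ha' h => le_antisymm h (hmax ha' h)⟩
    obtain ⟨hMsmod, hMsC₀, hMsneD⟩ := hMsS
    have hMsD : Ms ⊆ D := hMsmod.1
    have hno : ∀ X : Set V, IsModuleOn G D X → (X ∩ Ms).Nonempty → ¬ X ⊆ Ms → ¬ Ms ⊆ X → False := by
      intro X hXmod hXMs hXsub hMssub
      have hXD : X ⊆ D := hXmod.1
      have hU : X ∪ Ms = D := by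
        by_contra hUne
        have hUmod : IsModuleOn G D (X ∪ Ms) := mod_union_aux hXmod hMsmod hXMs
        have hUS : X ∪ Ms ∈ S := ⟨hUmod, hMsC₀.trans subset_union_right, hUne⟩
        have heq : Ms = X ∪ Ms := hMsmax _ hUS subset_union_right
        obtain ⟨x, hxX, hxMs⟩ := Set.not_subset.mp hXsub
        exact hxMs (by rw [heq]; exact Or.inl hxX)
      obtain ⟨a₁, ha₁Ms, ha₁X⟩ := Set.not_subset.mp hMssub
      obtain ⟨b₁, hb₁X, hb₁Ms⟩ := Set.not_subset.mp hXsub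
      obtain ⟨z₁, hz₁X, hz₁Ms⟩ := hXMs
      have hIffA : ∀ z, z ∈ X → z ∈ Ms → ∀ a, a ∈ Ms → a ∉ X → (G.Adj z a ↔ G.Adj z₁ a₁) := by
        intro z hzX hzMs a haMs haX
        have h1 : G.Adj z a ↔ G.Adj b₁ a := hXmod.2 z hzX b₁ hb₁X a ⟨hMsD haMs, haX⟩
        have h2 : G.Adj a b₁ ↔ G.Adj a₁ b₁ := hMsmod.2 a haMs a₁ ha₁Ms b₁ ⟨hXD hb₁X, hb₁Ms⟩
        have h3 : G.Adj b₁ a₁ ↔ G.Adj z₁ a₁ := hXmod.2 b₁ hb₁X z₁ hz₁X a₁ ⟨hMsD ha₁Ms, ha₁X⟩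
        rw [G.adj_comm b₁ a] at h1
        rw [G.adj_comm a₁ b₁] at h2
        rw [h1, h2, h3]
      have hIffB : ∀ z, z ∈ X → z ∈ Ms → ∀ b, b ∈ X → b ∉ Ms → (G.Adj z b ↔ G.Adj z₁ a₁) := by
        intro z hzX hzMs b hbX hbMs
        have h1 : G.Adj z b ↔ G.Adj a₁ b := hMsmod.2 z hzMs a₁ ha₁Ms b ⟨hXD hbX, hbMs⟩
        have h2 : G.Adj b a₁ ↔ G.Adj z₁ a₁ := hXmod.2 b hbX z₁ hz₁X a₁ ⟨hMsD ha₁Ms, ha₁X⟩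
        rw [G.adj_comm a₁ b] at h1
        rw [h1, h2]
      have hpart : ∀ d ∈ D, (d ∈ X ∧ d ∈ Ms) ∨ ((d ∈ Ms ∧ d ∉ X) ∨ (d ∈ X ∧ d ∉ Ms)) := by
        intro d hd
        have hdu : d ∈ X ∪ Ms := by rw [hU]; exact hd
        by_cases h1 : d ∈ X
        · by_cases h2 : d ∈ Ms
          · exact Or.inl ⟨h1, h2⟩
          · exact Or.inr (Or.inr ⟨h1, h2⟩)
        · rcases hdu with h | h
          · exact absurd h h1
          · exact Or.inr (Or.inl ⟨h, h1⟩)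
      by_cases hcc : G.Adj z₁ a₁
      · -- complete between X∩Ms and the rest: complement of G[D] is disconnected
        have hcomp : ∀ z, z ∈ X → z ∈ Ms → ∀ w, w ∈ D → ¬ (w ∈ X ∧ w ∈ Ms) → G.Adj z w := by
          intro z hzX hzMs w hwD hw
          rcases hpart w hwD with h | h | h
          · exact absurd h hw
          · exact (hIffA z hzX hzMs w h.1 h.2).mpr hcc
          · exact (hIffB z hzX hzMs w h.1 h.2).mpr hcc
        have hreach := hco ⟨a₁, hMsD ha₁Ms⟩ ⟨z₁, hXD hz₁X⟩
        have hstep : ∀ ⦃w w' : ↥D⦄, Hc.Adj w w' →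
            (¬ ((w : V) ∈ X ∧ (w : V) ∈ Ms)) → ¬ ((w' : V) ∈ X ∧ (w' : V) ∈ Ms) := by
          intro w w' hA hw hw'
          obtain ⟨-, hnadj⟩ := (hHcAdjIff _ _).mp hA
          exact hnadj (hcomp (w' : V) hw'.1 hw'.2 (w : V) w.2 hw).symm
        exact reachable_closed_aux hstep hreach (fun h => ha₁X h.1) ⟨hz₁X, hz₁Ms⟩
      · -- anticomplete between X∩Ms and the rest: G[D] is disconnected
        have hanti : ∀ z, z ∈ X → z ∈ Ms → ∀ w, w ∈ D → ¬ (w ∈ X ∧ w ∈ Ms) → ¬ G.Adj z w := by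
          intro z hzX hzMs w hwD hw
          rcases hpart w hwD with h | h | h
          · exact absurd h hw
          · exact fun hadj' => hcc ((hIffA z hzX hzMs w h.1 h.2).mp hadj')
          · exact fun hadj' => hcc ((hIffB z hzX hzMs w h.1 h.2).mp hadj')
        have hreach := hDpre ⟨a₁, hMsD ha₁Ms⟩ ⟨z₁, hXD hz₁X⟩
        have hstep : ∀ ⦃w w' : ↥D⦄, (G.induce D).Adj w w' →
            (¬ ((w : V) ∈ X ∧ (w : V) ∈ Ms)) → ¬ ((w' : V) ∈ X ∧ (w' : V) ∈ Ms) := by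
          intro w w' hA hw hw'
          have hAG : G.Adj (w : V) (w' : V) := hA
          exact hanti (w' : V) hw'.1 hw'.2 (w : V) w.2 hw hAG.symm
        exact reachable_closed_aux hstep hreach (fun h => ha₁X h.1) ⟨hz₁X, hz₁Ms⟩
    have htri : ∀ X : Set V, IsModuleOn G D X → Ms ⊆ X ∨ X ⊆ Ms ∨ Ms ∩ X = ∅ := by
      intro X hX
      by_cases h1 : Ms ⊆ X
      · exact Or.inl h1
      by_cases h2 : X ⊆ Ms
      · exact Or.inr (Or.inl h2)
      refine Or.inr (Or.inr ?_)
      by_contra h3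
      obtain ⟨x, hx⟩ := Set.nonempty_iff_ne_empty.mpr h3
      exact hno X hX ⟨x, hx.2, hx.1⟩ h2 h1
    have hmaxp : ∀ M' : Set V, M'.Nonempty → IsStrongOn G D M' → Ms ⊆ M' → M' = Ms := by
      intro M' hM'ne hM's hsub
      have hM'S : M' ∈ S := ⟨hM's.1, hMsC₀.trans hsub, hM's.2.1⟩
      exact (hMsmax M' hM'S hsub).symm
    have hMsMax : IsMaxStrongOn G D Ms := ⟨⟨p, hMsC₀ hpC₀⟩, ⟨hMsmod, hMsneD, htri⟩, hmaxp⟩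
    exact hne ((maxstrong_eq_aux hMp hMsMax ⟨p, hp, hMsC₀ hpC₀⟩).trans
      (maxstrong_eq_aux hMq hMsMax ⟨q, hq, hMsC₀ hqC₀⟩).symm)
  · -- CASE 2 : complement of G[D] disconnected
    have hco' : ∃ v₁ v₂ : ↥D, ¬ Hc.Reachable v₁ v₂ := by
      by_contra h; push_neg at h; exact hco fun a b => h a b
    obtain ⟨v₁, v₂, hv12⟩ := hco'
    set Kc : ↥D → Set V := fun v => {d | ∃ h : d ∈ D, Hc.Reachable ⟨d, h⟩ v} with hKcdef
    have hKmem : ∀ (v : ↥D) (d : V), d ∈ Kc v ↔ ∃ h : d ∈ D, Hc.Reachable ⟨d, h⟩ v := by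
      intro v d; rw [hKcdef]; exact Iff.rfl
    have hKsub : ∀ v, Kc v ⊆ D := by
      intro v d hd; obtain ⟨h, -⟩ := (hKmem v d).mp hd; exact h
    have hKself : ∀ v : ↥D, (v : V) ∈ Kc v := fun v => (hKmem v v).mpr ⟨v.2, Reachable.refl v⟩
    have hKreach : ∀ (v : ↥D) (d : V) (hd : d ∈ D), d ∈ Kc v → Hc.Reachable ⟨d, hd⟩ v := by
      intro v d hd h; obtain ⟨h', hr⟩ := (hKmem v d).mp h; exact hr
    have hKcomplete : ∀ (v : ↥D) (z : V), z ∈ D → z ∉ Kc v → ∀ x, x ∈ Kc v → G.Adj z x := by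
      intro v z hzD hzK x hxK
      obtain ⟨hxD, hrx⟩ := (hKmem v x).mp hxK
      by_contra hnadj
      have hzx : z ≠ x := by rintro rfl; exact hzK hxK
      have hA : Hc.Adj ⟨z, hzD⟩ ⟨x, hxD⟩ := (hHcAdjIff _ _).mpr ⟨hzx, hnadj⟩
      exact hzK ((hKmem v z).mpr ⟨hzD, hA.reachable.trans hrx⟩)
    have hKmod : ∀ v, IsModuleOn G D (Kc v) := by
      intro v
      refine ⟨hKsub v, fun x hx y hy z hz => ?_⟩
      exact iff_of_true (hKcomplete v z hz.1 hz.2 x hx).symm (hKcomplete v z hz.1 hz.2 y hy).symm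
    have hKeq : ∀ (v : ↥D) (d : V) (hd : d ∈ D), d ∈ Kc v → Kc ⟨d, hd⟩ = Kc v := by
      intro v d hd hdK
      have hr := hKreach v d hd hdK
      ext e
      constructor
      · intro heK
        obtain ⟨he, hre⟩ := (hKmem _ e).mp heK
        exact (hKmem v e).mpr ⟨he, hre.trans hr⟩
      · intro heK
        obtain ⟨he, hre⟩ := (hKmem v e).mp heK
        exact (hKmem _ e).mpr ⟨he, hre.trans hr.symm⟩
    have hKneD : ∀ v, Kc v ≠ D := by
      intro v hvD
      have h1 : (v₁ : V) ∈ Kc v := by rw [hvD]; exact v₁.2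
      have h2 : (v₂ : V) ∈ Kc v := by rw [hvD]; exact v₂.2
      have r1 := hKreach v (v₁ : V) v₁.2 h1
      have r2 := hKreach v (v₂ : V) v₂.2 h2
      exact hv12 (r1.trans r2.symm)
    have hKstrong : ∀ v, IsStrongOn G D (Kc v) := by
      intro v
      refine ⟨hKmod v, hKneD v, ?_⟩
      intro X hX
      by_cases h1 : Kc v ⊆ X
      · exact Or.inl h1
      by_cases h2 : X ⊆ Kc v
      · exact Or.inr (Or.inl h2)
      refine Or.inr (Or.inr ?_)
      by_contra h3
      obtain ⟨x, hxK, hxX⟩ := Set.nonempty_iff_ne_empty.mpr h3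
      obtain ⟨x', hx'X, hx'K⟩ := Set.not_subset.mp h2
      obtain ⟨y, hyK, hyX⟩ := Set.not_subset.mp h1
      have hcompl : ∀ w, w ∈ Kc v → w ∈ X → ∀ y', y' ∈ Kc v → y' ∉ X → G.Adj w y' := by
        intro w hwK hwX y' hy'K hy'X
        have hcx' : G.Adj x' y' := hKcomplete v x' (hX.1 hx'X) hx'K y' hy'K
        exact (hX.2 w hwX x' hx'X y' ⟨hKsub v hy'K, hy'X⟩).mpr hcx'
      have hrxy : Hc.Reachable ⟨x, hKsub v hxK⟩ ⟨y, hKsub v hyK⟩ :=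
        (hKreach v x _ hxK).trans (hKreach v y _ hyK).symm
      have hstep : ∀ ⦃w w' : ↥D⦄, Hc.Adj w w' →
          ((w : V) ∈ Kc v ∧ (w : V) ∈ X) → ((w' : V) ∈ Kc v ∧ (w' : V) ∈ X) := by
        intro w w' hA hw
        obtain ⟨-, hnadj⟩ := (hHcAdjIff _ _).mp hA
        have hw'K : (w' : V) ∈ Kc v :=
          (hKmem v _).mpr ⟨w'.2, hA.symm.reachable.trans (hKreach v (w : V) w.2 hw.1)⟩
        refine ⟨hw'K, ?_⟩
        by_contra hw'X
        exact hnadj (hcompl (w : V) hw.1 hw.2 (w' : V) hw'K hw'X)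
      exact hyX (reachable_closed_aux hstep hrxy ⟨hxK, hxX⟩).2
    have hKmaxstrong : ∀ v, IsMaxStrongOn G D (Kc v) := by
      intro v
      refine ⟨⟨(v : V), hKself v⟩, hKstrong v, ?_⟩
      intro M' hM'ne hM'strong hsub
      by_contra hM'ne'
      have hvM' : (v : V) ∈ M' := hsub (hKself v)
      have hproper : ∃ t, t ∈ M' ∧ t ∉ Kc v := by
        by_contra h; push_neg at h
        exact hM'ne' (Set.Subset.antisymm h hsub)
      obtain ⟨t, htM', htK⟩ := hproper
      have htD : t ∈ D := hM'strong.1.1 htM'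
      have hKtM' : Kc ⟨t, htD⟩ ⊆ M' := by
        rcases hM'strong.2.2 (Kc ⟨t, htD⟩) (hKmod _) with h | h | h
        · exfalso
          have hvKt : (v : V) ∈ Kc ⟨t, htD⟩ := h hvM'
          have he : Kc v = Kc ⟨t, htD⟩ := hKeq ⟨t, htD⟩ (v : V) v.2 hvKt
          exact htK (by rw [he]; exact hKself _)
        · exact h
        · exact absurd h (Set.nonempty_iff_ne_empty.mp ⟨t, htM', hKself ⟨t, htD⟩⟩)
      obtain ⟨s, hsD, hsM'⟩ : ∃ s, s ∈ D ∧ s ∉ M' := by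
        by_contra h; push_neg at h
        exact hM'strong.2.1 (Set.Subset.antisymm hM'strong.1.1 fun s hs => h s hs)
      have hYmod : IsModuleOn G D (Kc v ∪ (D \ M')) := by
        refine ⟨union_subset (hKsub v) diff_subset, ?_⟩
        have hzY : ∀ z, z ∈ D \ (Kc v ∪ (D \ M')) → ∀ w ∈ Kc v ∪ (D \ M'), G.Adj z w := by
          intro z hz w hw
          have hzM' : z ∈ M' := by
            by_contra h; exact hz.2 (Or.inr ⟨hz.1, h⟩)
          have hzK : z ∉ Kc v := fun h => hz.2 (Or.inl h)
          rcases hw with hwK | hwDM'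
          · exact hKcomplete v z hz.1 hzK w hwK
          · have hwK : w ∉ Kc v := fun h => hwDM'.2 (hsub h)
            have h1 : G.Adj z w ↔ G.Adj (v : V) w :=
              hM'strong.1.2 z hzM' (v : V) hvM' w hwDM'
            exact h1.mpr (hKcomplete v w hwDM'.1 hwK (v : V) (hKself v)).symm
        intro x hx y hy z hz
        exact iff_of_true (hzY z hz x hx).symm (hzY z hz y hy).symm
      rcases hM'strong.2.2 (Kc v ∪ (D \ M')) hYmod with h | h | h
      · rcases h htM' with hk | hd
        · exact htK hk
        · exact hd.2 htM'
      · exact hsM' (h (Or.inr ⟨hsD, hsM'⟩))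
      · exact absurd h (Set.nonempty_iff_ne_empty.mp ⟨(v : V), hvM', Or.inl (hKself v)⟩)
    have hmaxrep : ∀ M : Set V, IsMaxStrongOn G D M →
        ∃ (m : V) (hm : m ∈ D), m ∈ M ∧ M = Kc ⟨m, hm⟩ := by
      intro M hM
      obtain ⟨m, hmM⟩ := hM.1
      have hmD : m ∈ D := hM.2.1.1.1 hmM
      refine ⟨m, hmD, hmM, ?_⟩
      rcases hM.2.1.2.2 (Kc ⟨m, hmD⟩) (hKmod _) with h | h | h
      · exact (hM.2.2 (Kc ⟨m, hmD⟩) ⟨m, hKself _⟩ (hKstrong _) h).symm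
      · exact (hKmaxstrong ⟨m, hmD⟩).2.2 M hM.1 hM.2.1 h
      · exact absurd h (Set.nonempty_iff_ne_empty.mp ⟨m, hmM, hKself ⟨m, hmD⟩⟩)
    constructor
    · -- quotient is a clique
      intro M M' hM hM' hMM' x hxM y hyM'
      obtain ⟨m, hm, hmM, hMeq⟩ := hmaxrep M hM
      have hyD : y ∈ D := hM'.2.1.1.1 hyM'
      have hyM : y ∉ M := fun hyMmem => hMM' (maxstrong_eq_aux hM hM' ⟨y, hyMmem, hyM'⟩)
      rw [hMeq] at hxM hyM
      exact (hKcomplete ⟨m, hm⟩ y hyD hyM x hxM).symm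
    · -- N(u) ∩ D is a union of maximal strong modules
      intro M hM
      by_cases hMN : M ⊆ G.neighborSet u
      · exact Or.inl hMN
      right
      by_contra hMNe
      obtain ⟨x, hxM, hxN⟩ := Set.nonempty_iff_ne_empty.mpr hMNe
      obtain ⟨y, hyM, hyN⟩ := Set.not_subset.mp hMN
      have hxN' : G.Adj u x := hxN
      have hyN' : ¬ G.Adj u y := hyN
      obtain ⟨m, hm, hmM, hMeq⟩ := hmaxrep M hM
      have hMD : M ⊆ D := hM.2.1.1.1
      by_cases hpair : ∃ x' y', x' ∈ M ∧ y' ∈ M ∧ G.Adj u x' ∧ ¬ G.Adj u y' ∧ ¬ G.Adj x' y'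
      · obtain ⟨x', y', hx'M, hy'M, hux', huy', hnadj⟩ := hpair
        by_cases hw : ∃ w, w ∈ D ∧ w ∉ M ∧ ¬ G.Adj u w
        · obtain ⟨w, hwD, hwM, huw⟩ := hw
          rw [hMeq] at hwM hx'M hy'M
          have h1 : G.Adj w x' := hKcomplete ⟨m, hm⟩ w hwD hwM x' hx'M
          have h2 : G.Adj w y' := hKcomplete ⟨m, hm⟩ w hwD hwM y' hy'M
          exact hnadj (hR x' w y' (hKsub _ hx'M) hwD (hKsub _ hy'M) hux' h1.symm h2 huw huy')
        · push_neg at hw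
          have hpM : p ∈ M := by by_contra h; exact hup (hw p hpD h)
          have hqM : q ∈ M := by by_contra h; exact huq (hw q hqD h)
          exact hne ((maxstrong_eq_aux hMp hM ⟨p, hp, hpM⟩).trans
            (maxstrong_eq_aux hMq hM ⟨q, hq, hqM⟩).symm)
      · push_neg at hpair
        have hrxy : Hc.Reachable ⟨x, hMD hxM⟩ ⟨y, hMD hyM⟩ := by
          rw [hMeq] at hxM hyM
          exact (hKreach _ x _ hxM).trans (hKreach _ y _ hyM).symm
        have hstep : ∀ ⦃w w' : ↥D⦄, Hc.Adj w w' →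
            ((w : V) ∈ M ∧ G.Adj u (w : V)) → ((w' : V) ∈ M ∧ G.Adj u (w' : V)) := by
          intro w w' hA hw
          obtain ⟨-, hnadj⟩ := (hHcAdjIff _ _).mp hA
          have hw'M : (w' : V) ∈ M := by
            rw [hMeq]
            refine (hKmem _ _).mpr ⟨w'.2, ?_⟩
            have hwr := hKreach ⟨m, hm⟩ (w : V) w.2 (by rw [← hMeq]; exact hw.1)
            exact hA.symm.reachable.trans hwr
          refine ⟨hw'M, ?_⟩
          by_contra hw'N
          exact hnadj (hpair (w : V) (w' : V) hw.1 hw'M hw.2 hw'N)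
        exact hyN' (reachable_closed_aux hstep hrxy ⟨hxM, hxN'⟩).2
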